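/- Existence of small covers for sparse perturbations: Let x, y ∈ [0,1]^n be such that the vector y - x is k-sparse. Then there exists a partition {I_1,...,I_m} of [n] that is a cover of (x,y) with m ≤ 3k + 1. -/

import Mathlib

open Finset

/-- A set function on subsets of `Fin n` is submodular (diminishing returns). -/
def Submodular {n : ℕ} (F : Finset (Fin n) → ℝ) : Prop :=
  ∀ ⦃A B : Finset (Fin n)⦄, A ⊆ B → ∀ i ∉ B,
    F (insert i A) - F A ≥ F (insert i B) - F B

/-- `P` is the permutation consistent with `x`: coordinates in nonincreasing order,
ties broken by increasing index. -/
def Consistent {n : ℕ} (x : Fin n → ℝ) (P : Equiv.Perm (Fin n)) : Prop :=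
  ∀ i j : Fin n, i ≤ j → x (P i) ≥ x (P j) ∧ (x (P i) = x (P j) → P i ≤ P j)

/-- `P[k] = {P_1, …, P_k}` (0-indexed: the images of positions `< k`). -/
def prefixSet {n : ℕ} (P : Equiv.Perm (Fin n)) (k : ℕ) : Finset (Fin n) :=
  (Finset.univ.filter (fun i : Fin n => (i : ℕ) < k)).image P

/-- The Lovász extension of `F` at `x`, expressed via the permutation `P` consistent
with `x`. -/
def lovaszExt {n : ℕ} (F : Finset (Fin n) → ℝ) (P : Equiv.Perm (Fin n))
    (x : Fin n → ℝ) : ℝ :=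
  ∑ i : Fin n, (F (prefixSet P ((i : ℕ) + 1)) - F (prefixSet P (i : ℕ))) * x (P i)

/-- The Lovász subgradient at `x`: `g(x)_{P_i} = F(P[i]) - F(P[i-1])`. -/
def lovaszGrad {n : ℕ} (F : Finset (Fin n) → ℝ) (P : Equiv.Perm (Fin n)) :
    Fin n → ℝ :=
  fun j => F (prefixSet P ((P.symm j : ℕ) + 1)) - F (prefixSet P ((P.symm j : ℕ)))

/-- `I` is a cover of `(x, y)` (with `m` blocks): a partition of `[n]` whose blocks
have consecutive preimages under both consistent permutations `P` (for `x`) and `Q`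
(for `y`), and on whose non-singleton blocks `x` and `y` agree. -/
def IsCover {n m : ℕ} (x y : Fin n → ℝ) (P Q : Equiv.Perm (Fin n))
    (I : Fin m → Finset (Fin n)) : Prop :=
  (∀ s t : Fin m, s ≠ t → Disjoint (I s) (I t)) ∧
  (Finset.univ.biUnion I = Finset.univ) ∧
  (∀ s : Fin m, ∃ a b : ℕ, ∀ i : Fin n, P i ∈ I s ↔ a ≤ (i : ℕ) ∧ (i : ℕ) < b) ∧
  (∀ s : Fin m, ∃ a b : ℕ, ∀ i : Fin n, Q i ∈ I s ↔ a ≤ (i : ℕ) ∧ (i : ℕ) < b) ∧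
  (∀ s : Fin m, 1 < (I s).card → ∀ i ∈ I s, x i = y i)

section SmallCoverAux

variable {n : ℕ}

/-- rank of `i` within `S`. -/
def rkAux (S : Finset (Fin n)) (i : Fin n) : ℕ := (S.filter (fun j => j < i)).card

/-- number of elements of `S` strictly before `i` in `P`-order. -/
def cntAux (S : Finset (Fin n)) (P : Equiv.Perm (Fin n)) (i : Fin n) : ℕ :=
  (S.filter (fun j => P.symm j < P.symm i)).card

lemma rkAux_lt {S : Finset (Fin n)} {i j : Fin n} (hi : i ∈ S) (h : i < j) :
    rkAux S i < rkAux S j := by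
  apply Finset.card_lt_card
  constructor
  · exact Finset.monotone_filter_right _ (fun a _ ha => lt_trans ha h)
  · intro hsub
    have : i ∈ S.filter (fun j' => j' < i) := hsub (by simp [hi, h])
    simp at this

lemma rkAux_inj {S : Finset (Fin n)} {i j : Fin n} (hi : i ∈ S) (hj : j ∈ S)
    (h : rkAux S i = rkAux S j) : i = j := by
  rcases lt_trichotomy i j with h' | h' | h'
  · exact absurd h (Nat.ne_of_lt (rkAux_lt hi h'))
  · exact h'
  · exact absurd h.symm (Nat.ne_of_lt (rkAux_lt hj h'))

lemma rkAux_lt_card {S : Finset (Fin n)} {i : Fin n} (hi : i ∈ S) :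
    rkAux S i < S.card := by
  apply Finset.card_lt_card
  exact Finset.filter_ssubset.mpr ⟨i, hi, by simp⟩

lemma cntAux_le_card (S : Finset (Fin n)) (P : Equiv.Perm (Fin n)) (i : Fin n) :
    cntAux S P i ≤ S.card :=
  Finset.card_le_card (Finset.filter_subset _ _)

lemma cntAux_mono {S : Finset (Fin n)} {P : Equiv.Perm (Fin n)} {i j : Fin n}
    (h : P.symm i ≤ P.symm j) : cntAux S P i ≤ cntAux S P j :=
  Finset.card_le_card (Finset.monotone_filter_right _ (fun a _ ha => lt_of_lt_of_le ha h))

lemma cntAux_lt_of_mem {S : Finset (Fin n)} {P : Equiv.Perm (Fin n)} {d j : Fin n}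
    (hd : d ∈ S) (h : P.symm d < P.symm j) : cntAux S P d < cntAux S P j := by
  apply Finset.card_lt_card
  constructor
  · exact Finset.monotone_filter_right _ (fun a _ ha => lt_trans ha h)
  · intro hsub
    have : d ∈ S.filter (fun j' => P.symm j' < P.symm d) := hsub (by simp [hd, h])
    simp at this

/-- order agreement on coordinates where `x` and `y` agree -/
lemma order_agree (x y : Fin n → ℝ) (P Q : Equiv.Perm (Fin n))
    (hP : Consistent x P) (hQ : Consistent y Q) {i j : Fin n}
    (hi : x i = y i) (hj : x j = y j) (h : P.symm i < P.symm j) :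
    Q.symm i < Q.symm j := by
  have hij : i ≠ j := by
    intro e; subst e; exact absurd rfl (ne_of_lt h)
  have h1 := hP (P.symm i) (P.symm j) h.le
  simp only [Equiv.apply_symm_apply] at h1
  rcases lt_trichotomy (Q.symm i) (Q.symm j) with h' | h' | h'
  · exact h'
  · exact absurd (Q.symm.injective h') hij
  · have h2 := hQ (Q.symm j) (Q.symm i) h'.le
    simp only [Equiv.apply_symm_apply] at h2
    have hxij : x i = x j := le_antisymm (by rw [hi, hj]; exact h2.1) h1.1
    have hle1 : i ≤ j := h1.2 hxij
    have hle2 : j ≤ i := h2.2 (by rw [← hi, ← hj, hxij])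
    exact absurd (le_antisymm hle1 hle2) hij

lemma between {S : Finset (Fin n)} {P Q : Equiv.Perm (Fin n)}
    (hagree : ∀ i j : Fin n, i ∉ S → j ∉ S → P.symm i < P.symm j → Q.symm i < Q.symm j)
    {p1 p2 p3 : Fin n} (h12 : p1 ≤ p2) (h23 : p2 ≤ p3)
    (h1 : P p1 ∉ S) (h3 : P p3 ∉ S)
    (hg : cntAux S P (P p1) + cntAux S Q (P p1) = cntAux S P (P p3) + cntAux S Q (P p3)) :
    P p2 ∉ S ∧ cntAux S P (P p2) + cntAux S Q (P p2) = cntAux S P (P p1) + cntAux S Q (P p1) := by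
  have qle : ∀ {a b : Fin n}, P a ∉ S → P b ∉ S → a ≤ b → Q.symm (P a) ≤ Q.symm (P b) := by
    intro a b ha hb hab
    rcases eq_or_lt_of_le hab with h' | h'
    · subst h'; exact le_refl _
    · exact (hagree _ _ ha hb (by simpa using h')).le
  by_cases hmem : P p2 ∈ S
  · exfalso
    have h12' : p1 < p2 := lt_of_le_of_ne h12 (fun e => h1 (by rw [e]; exact hmem))
    have h23' : p2 < p3 := lt_of_le_of_ne h23 (fun e => h3 (by rw [← e]; exact hmem))
    have hP13 : cntAux S P (P p1) < cntAux S P (P p3) := by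
      calc cntAux S P (P p1) ≤ cntAux S P (P p2) := cntAux_mono (by simpa using h12)
        _ < cntAux S P (P p3) := cntAux_lt_of_mem hmem (by simpa using h23')
    have hQ13 : cntAux S Q (P p1) ≤ cntAux S Q (P p3) :=
      cntAux_mono (qle h1 h3 (le_trans h12 h23))
    omega
  · refine ⟨hmem, ?_⟩
    have a12 : cntAux S P (P p1) ≤ cntAux S P (P p2) := cntAux_mono (by simpa using h12)
    have a23 : cntAux S P (P p2) ≤ cntAux S P (P p3) := cntAux_mono (by simpa using h23)
    have b12 : cntAux S Q (P p1) ≤ cntAux S Q (P p2) := cntAux_mono (qle h1 hmem h12)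
    have b23 : cntAux S Q (P p2) ≤ cntAux S Q (P p3) := cntAux_mono (qle hmem h3 h23)
    omega

lemma interval_of_between (P : Equiv.Perm (Fin n)) (T : Finset (Fin n))
    (hbet : ∀ p1 p2 p3 : Fin n, p1 ≤ p2 → p2 ≤ p3 → P p1 ∈ T → P p3 ∈ T → P p2 ∈ T) :
    ∃ a b : ℕ, ∀ i : Fin n, P i ∈ T ↔ a ≤ (i : ℕ) ∧ (i : ℕ) < b := by
  by_cases hT : T.Nonempty
  · obtain ⟨i1, hi1, hmin⟩ := T.exists_min_image (fun i => (P.symm i : ℕ)) hT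
    obtain ⟨i2, hi2, hmax⟩ := T.exists_max_image (fun i => (P.symm i : ℕ)) hT
    refine ⟨(P.symm i1 : ℕ), (P.symm i2 : ℕ) + 1, fun p => ⟨fun hp => ?_, fun hp => ?_⟩⟩
    · have m1 := hmin (P p) hp
      have m2 := hmax (P p) hp
      simp only [Equiv.symm_apply_apply] at m1 m2
      omega
    · have hle1 : P.symm i1 ≤ p := by
        rw [Fin.le_def]; exact hp.1
      have hle2 : p ≤ P.symm i2 := by
        rw [Fin.le_def]; omega
      have := hbet (P.symm i1) p (P.symm i2) hle1 hle2
        (by simpa using hi1) (by simpa using hi2)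
      exact this
  · exact ⟨0, 0, fun p => by
      simp [Finset.not_nonempty_iff_eq_empty.mp hT]⟩

end SmallCoverAux

/-- **Existence of small covers for sparse perturbations.** If `y - x` is `k`-sparse
then `(x, y)` admits a cover with at most `3k + 1` blocks. -/
theorem exists_small_cover {n k : ℕ} (x y : Fin n → ℝ)
    (hx : ∀ i, x i ∈ Set.Icc (0 : ℝ) 1) (hy : ∀ i, y i ∈ Set.Icc (0 : ℝ) 1)
    (hsparse : (Finset.univ.filter (fun i => y i ≠ x i)).card ≤ k)
    (P Q : Equiv.Perm (Fin n)) (hP : Consistent x P) (hQ : Consistent y Q) :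
    ∃ (m : ℕ) (I : Fin m → Finset (Fin n)), m ≤ 3 * k + 1 ∧ IsCover x y P Q I := by
  classical
  set S : Finset (Fin n) := Finset.univ.filter (fun i => y i ≠ x i) with hSdef
  have hScard : S.card ≤ k := hsparse
  have hmemS : ∀ i : Fin n, i ∉ S ↔ x i = y i := by
    intro i; simp [hSdef, eq_comm]
  have hagPQ : ∀ i j : Fin n, i ∉ S → j ∉ S → P.symm i < P.symm j → Q.symm i < Q.symm j := by
    intro i j hi hj h
    exact order_agree x y P Q hP hQ ((hmemS i).mp hi) ((hmemS j).mp hj) h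
  have hagQP : ∀ i j : Fin n, i ∉ S → j ∉ S → Q.symm i < Q.symm j → P.symm i < P.symm j := by
    intro i j hi hj h
    exact order_agree y x Q P hQ hP ((hmemS i).mp hi).symm ((hmemS j).mp hj).symm h
  set I : Fin (3*k+1) → Finset (Fin n) := fun s =>
    if (s : ℕ) < k then S.filter (fun i => rkAux S i = (s:ℕ))
    else Finset.univ.filter (fun i => i ∉ S ∧ cntAux S P i + cntAux S Q i + k = (s:ℕ))
    with hIdef
  refine ⟨3*k+1, I, le_refl _, ?_, ?_, ?_, ?_, ?_⟩
  · -- disjoint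
    intro s t hst
    rw [Finset.disjoint_left]
    intro i hi hj
    by_cases hs : (s:ℕ) < k <;> by_cases ht : (t:ℕ) < k <;>
      simp [hIdef, hs, ht] at hi hj
    · obtain ⟨_, h1⟩ := hi; obtain ⟨_, h2⟩ := hj
      exact hst (Fin.ext (by omega))
    · exact hj.1 hi.1
    · exact hi.1 hj.1
    · obtain ⟨_, h1⟩ := hi; obtain ⟨_, h2⟩ := hj
      exact hst (Fin.ext (by omega))
  · -- union
    ext i
    simp only [Finset.mem_biUnion, Finset.mem_univ, iff_true, true_and]
    by_cases hiS : i ∈ S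
    · have hrk : rkAux S i < k := lt_of_lt_of_le (rkAux_lt_card hiS) hScard
      exact ⟨⟨rkAux S i, by omega⟩, by simp [hIdef, hrk, hiS]⟩
    · have h1 : cntAux S P i ≤ k := le_trans (cntAux_le_card S P i) hScard
      have h2 : cntAux S Q i ≤ k := le_trans (cntAux_le_card S Q i) hScard
      have hc : ¬ (cntAux S P i + cntAux S Q i + k < k) := by omega
      exact ⟨⟨cntAux S P i + cntAux S Q i + k, by omega⟩, by simp [hIdef, hc, hiS]⟩
  · -- P intervals
    intro s
    apply interval_of_between
    intro p1 p2 p3 h12 h23 h1 h3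
    by_cases hs : (s:ℕ) < k
    · simp only [hIdef, hs, if_true, Finset.mem_filter] at h1 h3 ⊢
      have he : P p1 = P p3 := rkAux_inj h1.1 h3.1 (h1.2.trans h3.2.symm)
      have hp : p1 = p3 := P.injective he
      have h21 : p2 = p1 := le_antisymm (hp ▸ h23) h12
      rw [h21]; exact h1
    · simp only [hIdef, hs, if_false, Finset.mem_filter, Finset.mem_univ, true_and] at h1 h3 ⊢
      obtain ⟨hb, hgeq⟩ := between hagPQ h12 h23 h1.1 h3.1 (by omega)
      exact ⟨hb, by omega⟩
  · -- Q intervals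
    intro s
    apply interval_of_between
    intro p1 p2 p3 h12 h23 h1 h3
    by_cases hs : (s:ℕ) < k
    · simp only [hIdef, hs, if_true, Finset.mem_filter] at h1 h3 ⊢
      have he : Q p1 = Q p3 := rkAux_inj h1.1 h3.1 (h1.2.trans h3.2.symm)
      have hp : p1 = p3 := Q.injective he
      have h21 : p2 = p1 := le_antisymm (hp ▸ h23) h12
      rw [h21]; exact h1
    · simp only [hIdef, hs, if_false, Finset.mem_filter, Finset.mem_univ, true_and] at h1 h3 ⊢
      obtain ⟨hb, hgeq⟩ := between hagQP h12 h23 h1.1 h3.1 (by omega)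
      exact ⟨hb, by omega⟩
  · -- agreement on big blocks
    intro s hcard i hi
    by_cases hs : (s:ℕ) < k
    · exfalso
      have hle : (I s).card ≤ 1 := by
        apply Finset.card_le_one.mpr
        intro a ha b hb
        simp only [hIdef, hs, if_true, Finset.mem_filter] at ha hb
        exact rkAux_inj ha.1 hb.1 (ha.2.trans hb.2.symm)
      omega
    · simp only [hIdef, hs, if_false, Finset.mem_filter, Finset.mem_univ, true_and] at hi
      exact (hmemS i).mp hi.1
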